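/- For any graph G with v vertices and e edges and all natural numbers m, the DP color function satisfies P_DP(G,m) ≤ m^v (m-1)^e / m^e. -/

import Mathlib

open SimpleGraph

/-- The number of proper `m`-colorings of a graph `G`. -/
noncomputable def numColorings {V : Type} (G : SimpleGraph V) (m : ℕ) : ℕ :=
  Nat.card {c : V → Fin m // ∀ ⦃a b : V⦄, G.Adj a b → c a ≠ c b}

/-- An `m`-fold cover `(L, H)` of a graph `G`. -/
structure DPCover {V : Type} (G : SimpleGraph V) (m : ℕ) where
  X : Type
  H : SimpleGraph X
  L : V → Set X
  partition : ∀ x : X, ∃! v : V, x ∈ L v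
  fold : ∀ v : V, Nat.card (L v) = m
  cliques : ∀ v : V, ∀ x ∈ L v, ∀ y ∈ L v, x ≠ y → H.Adj x y
  cross : ∀ u v : V, ∀ x ∈ L u, ∀ y ∈ L v, H.Adj x y → u = v ∨ G.Adj u v
  matching : ∀ u v : V, G.Adj u v → ∀ x ∈ L u, ∀ y ∈ L v, ∀ z ∈ L v,
      H.Adj x y → H.Adj x z → y = z
  matching' : ∀ u v : V, G.Adj u v → ∀ y ∈ L u, ∀ z ∈ L u, ∀ x ∈ L v,
      H.Adj y x → H.Adj z x → y = z

/-- A cover is full if for each edge `uv` of `G` the matching between `L u` and `L v`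
is a perfect matching. -/
def DPCover.IsFull {V : Type} {G : SimpleGraph V} {m : ℕ} (C : DPCover G m) : Prop :=
  ∀ u v : V, G.Adj u v → ∀ x ∈ C.L u, ∃ y ∈ C.L v, C.H.Adj x y

/-- An `H`-coloring of `G`, viewed as an independent transversal of the lists. -/
def DPCover.IsColoring {V : Type} {G : SimpleGraph V} {m : ℕ} (C : DPCover G m)
    (f : V → C.X) : Prop :=
  (∀ v : V, f v ∈ C.L v) ∧ ∀ u v : V, u ≠ v → ¬ C.H.Adj (f u) (f v)

/-- `P_DP(G, 𝓗)`, the number of `𝓗`-colorings of `G`. -/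
noncomputable def DPCover.count {V : Type} {G : SimpleGraph V} {m : ℕ}
    (C : DPCover G m) : ℕ :=
  Nat.card {f : V → C.X // C.IsColoring f}

/-- The DP color function `P_DP(G, m)`. -/
noncomputable def PDP {V : Type} (G : SimpleGraph V) (m : ℕ) : ℕ :=
  sInf {n : ℕ | ∃ C : DPCover G m, C.count = n}

/-- The DP-chromatic number `χ_DP(G)`. -/
noncomputable def chiDP {V : Type} (G : SimpleGraph V) : ℕ :=
  sInf {m : ℕ | ∀ C : DPCover G m, ∃ f : V → C.X, C.IsColoring f}

/-- A canonical labeling of an `m`-fold cover. -/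
def DPCover.HasCanonicalLabeling {V : Type} {G : SimpleGraph V} {m : ℕ}
    (C : DPCover G m) : Prop :=
  ∃ φ : V × Fin m → C.X, Function.Bijective φ ∧ (∀ v j, φ (v, j) ∈ C.L v) ∧
    ∀ u v : V, G.Adj u v → ∀ j : Fin m, C.H.Adj (φ (u, j)) (φ (v, j))

/-- A graph is 2-connected if it has at least 3 vertices, is connected, and
remains connected after deleting any single vertex. -/
def TwoConnected {V : Type} (G : SimpleGraph V) : Prop :=
  3 ≤ Nat.card V ∧ G.Connected ∧ ∀ v : V, (G.induce ({v}ᶜ : Set V)).Connected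

section Aux

variable {V : Type} [LinearOrder V]

/-- The set of oriented edges of `G` (each edge listed once, increasingly oriented). -/
abbrev OE (G : SimpleGraph V) : Type := {p : V × V // G.Adj p.1 p.2 ∧ p.1 < p.2}

open scoped Classical in
/-- The shift associated to an assignment of a `Fin m` value to each oriented edge. -/
noncomputable def sh (G : SimpleGraph V) {m : ℕ} [NeZero m]
    (τ : OE G → Fin m) (u v : V) : Fin m :=
  if h : G.Adj u v ∧ u < v then τ ⟨(u, v), h⟩
  else if h : G.Adj v u ∧ v < u then - τ ⟨(v, u), h⟩ else 0

lemma sh_of_lt (G : SimpleGraph V) {m : ℕ} [NeZero m] (τ : OE G → Fin m) {u v : V}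
    (h : G.Adj u v) (hlt : u < v) : sh G τ u v = τ ⟨(u, v), h, hlt⟩ := by
  unfold sh; rw [dif_pos ⟨h, hlt⟩]

lemma sh_of_gt (G : SimpleGraph V) {m : ℕ} [NeZero m] (τ : OE G → Fin m) {u v : V}
    (h : G.Adj u v) (hlt : v < u) : sh G τ u v = - τ ⟨(v, u), h.symm, hlt⟩ := by
  unfold sh; rw [dif_neg (fun hc => absurd hc.2 hlt.asymm), dif_pos ⟨h.symm, hlt⟩]

lemma sh_of_not_adj (G : SimpleGraph V) {m : ℕ} [NeZero m] (τ : OE G → Fin m) {u v : V}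
    (h : ¬ G.Adj u v) : sh G τ u v = 0 := by
  unfold sh
  rw [dif_neg (fun hc => h hc.1), dif_neg (fun hc => h hc.1.symm)]

lemma sh_symm (G : SimpleGraph V) {m : ℕ} [NeZero m]
    (τ : OE G → Fin m) (u v : V) :
    sh G τ v u = - sh G τ u v := by
  by_cases ha : G.Adj u v
  · rcases lt_trichotomy u v with h | h | h
    · rw [sh_of_lt G τ ha h, sh_of_gt G τ ha.symm h]
    · exact absurd h ha.ne
    · rw [sh_of_gt G τ ha h, sh_of_lt G τ ha.symm h, neg_neg]
  · rw [sh_of_not_adj G τ ha, sh_of_not_adj G τ (fun hc => ha hc.symm), neg_zero]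

/-- The twisted canonical cover determined by `τ`. -/
noncomputable def shiftCover (G : SimpleGraph V) (m : ℕ) [NeZero m]
    (τ : OE G → Fin m) : DPCover G m where
  X := V × Fin m
  H := { Adj := fun p q => (p.1 = q.1 ∧ p.2 ≠ q.2) ∨
          (G.Adj p.1 q.1 ∧ q.2 = p.2 + sh G τ p.1 q.1 ∧ p.2 = q.2 + sh G τ q.1 p.1)
         symm := by
           constructor
           rintro p q (⟨h1, h2⟩ | ⟨h1, h2, h3⟩)
           · exact Or.inl ⟨h1.symm, h2.symm⟩
           · exact Or.inr ⟨h1.symm, h3, h2⟩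
         loopless := by
           constructor
           rintro p (⟨_, h2⟩ | ⟨h1, _⟩)
           · exact h2 rfl
           · exact G.loopless.irrefl _ h1 }
  L := fun w => {p | p.1 = w}
  partition := fun x => ⟨x.1, rfl, fun y h => h.symm⟩
  fold := fun w => by
    have e : {p : V × Fin m // p.1 = w} ≃ Fin m :=
      ⟨fun p => p.1.2, fun i => ⟨(w, i), rfl⟩,
        fun p => Subtype.ext (Prod.ext p.2.symm rfl), fun i => rfl⟩
    exact (Nat.card_congr e).trans (by simp)
  cliques := by
    rintro w x hx y hy hne
    refine Or.inl ⟨hx.trans hy.symm, fun h2 => hne ?_⟩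
    exact Prod.ext (hx.trans hy.symm) h2
  cross := by
    rintro u w x hx y hy (⟨h1, _⟩ | ⟨h1, _⟩)
    · exact Or.inl (hx.symm.trans (h1.trans hy))
    · right; rw [← hx, ← hy]; exact h1
  matching := by
    rintro u w hu x hx y hy z hz (⟨h1, _⟩ | ⟨_, hy2, _⟩) hxz
    · exact absurd (hx.symm.trans (h1.trans hy)) hu.ne
    · rcases hxz with ⟨h1, _⟩ | ⟨_, hz2, _⟩
      · exact absurd (hx.symm.trans (h1.trans hz)) hu.ne
      · refine Prod.ext (hy.trans hz.symm) ?_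
        rw [hy2, hz2, hx, hy, hz]
  matching' := by
    rintro u w hu y hy z hz x hx (⟨h1, _⟩ | ⟨_, _, hy2⟩) hzx
    · exact absurd (hy.symm.trans (h1.trans hx)) hu.ne
    · rcases hzx with ⟨h1, _⟩ | ⟨_, _, hz2⟩
      · exact absurd (hz.symm.trans (h1.trans hx)) hu.ne
      · refine Prod.ext (hy.trans hz.symm) ?_
        rw [hy2, hz2, hx, hy, hz]

lemma shiftCover_count (G : SimpleGraph V) (m : ℕ) [NeZero m]
    (τ : OE G → Fin m) :
    (shiftCover G m τ).count =
      Nat.card {c : V → Fin m // ∀ ⦃u w : V⦄, G.Adj u w → c u + sh G τ u w ≠ c w} := by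
  apply Nat.card_congr
  refine ⟨fun f => ⟨fun w => (f.1 w).2, ?_⟩, fun c => ⟨fun w => (w, c.1 w), ?_⟩, ?_, ?_⟩
  · intro u w huw heq
    apply f.2.2 u w huw.ne
    have hu : (f.1 u).1 = u := f.2.1 u
    have hw : (f.1 w).1 = w := f.2.1 w
    refine Or.inr ⟨?_, ?_, ?_⟩
    · rw [hu, hw]; exact huw
    · rw [hu, hw, heq]
    · have heq' : (f.1 u).2 + sh G τ u w = (f.1 w).2 := heq
      rw [hu, hw, sh_symm, ← heq', add_neg_cancel_right]
  · refine ⟨fun w => rfl, ?_⟩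
    rintro u w hne (⟨h1, _⟩ | ⟨h1, h2, _⟩)
    · exact hne h1
    · exact c.2 h1 h2.symm
  · intro f
    exact Subtype.ext (funext fun w => Prod.ext (f.2.1 w).symm rfl)
  · intro c
    rfl

lemma card_orientedEdges (G : SimpleGraph V) :
    Nat.card (OE G) = Nat.card G.edgeSet := by
  refine Nat.card_eq_of_bijective
    (fun p => ⟨s(p.1.1, p.1.2), (G.mem_edgeSet).mpr p.2.1⟩) ⟨?_, ?_⟩
  · rintro ⟨⟨a, b⟩, hab, hab'⟩ ⟨⟨c, d⟩, hcd, hcd'⟩ h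
    simp only [Subtype.mk.injEq, Sym2.eq_iff] at h
    rcases h with ⟨h1, h2⟩ | ⟨h1, h2⟩
    · simp [h1, h2]
    · subst h1; subst h2
      exact absurd hcd' (lt_asymm hab')
  · rintro ⟨s, hs⟩
    induction s using Sym2.ind with
    | _ u w =>
      rw [SimpleGraph.mem_edgeSet] at hs
      rcases lt_or_gt_of_ne hs.ne with h | h
      · exact ⟨⟨(u, w), hs, h⟩, rfl⟩
      · exact ⟨⟨(w, u), hs.symm, h⟩, Subtype.ext Sym2.eq_swap⟩

lemma sum_shiftCover_count (G : SimpleGraph V) [Fintype V] (m : ℕ) [NeZero m]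
    [Fintype (OE G)] :
    ∑ τ : OE G → Fin m, (shiftCover G m τ).count =
      m ^ Fintype.card V * (m - 1) ^ Fintype.card (OE G) := by
  classical
  have key : ∀ τ : OE G → Fin m, (shiftCover G m τ).count =
      (Finset.univ.filter fun c : V → Fin m =>
        ∀ p : OE G, τ p ≠ c p.1.2 - c p.1.1).card := by
    intro τ
    rw [shiftCover_count, ← Fintype.card_subtype, Nat.card_eq_fintype_card]
    apply Fintype.card_congr
    apply Equiv.subtypeEquivRight
    intro c
    constructor
    · intro hc p hp
      apply hc p.2.1
      rw [sh_of_lt G τ p.2.1 p.2.2]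
      have : (⟨(p.1.1, p.1.2), p.2.1, p.2.2⟩ : OE G) = p := by
        apply Subtype.ext; rfl
      rw [this, hp, add_sub_cancel]
    · intro hc u w huw heq
      rcases lt_trichotomy u w with h | h | h
      · exact hc ⟨(u, w), huw, h⟩
          (by rw [← sh_of_lt G τ huw h, ← heq, add_sub_cancel_left])
      · exact huw.ne h
      · apply hc ⟨(w, u), huw.symm, h⟩
        show τ _ = c u - c w
        rw [sh_of_gt G τ huw h] at heq
        rw [← heq]
        abel
  calc ∑ τ : OE G → Fin m, (shiftCover G m τ).count
      = ∑ τ : OE G → Fin m, ∑ c : V → Fin m,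
          (if ∀ p : OE G, τ p ≠ c p.1.2 - c p.1.1 then 1 else 0) := by
        refine Finset.sum_congr rfl fun τ _ => ?_
        rw [key τ, Finset.card_filter]
    _ = ∑ c : V → Fin m, ∑ τ : OE G → Fin m,
          (if ∀ p : OE G, τ p ≠ c p.1.2 - c p.1.1 then 1 else 0) := Finset.sum_comm
    _ = ∑ c : V → Fin m, (m - 1) ^ Fintype.card (OE G) := by
        refine Finset.sum_congr rfl fun c _ => ?_
        rw [← Finset.card_filter, ← Fintype.card_subtype]
        have e : {τ : OE G → Fin m // ∀ p : OE G, τ p ≠ c p.1.2 - c p.1.1} ≃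
            ∀ p : OE G, {x : Fin m // x ≠ c p.1.2 - c p.1.1} :=
          Equiv.subtypePiEquivPi (p := fun (q : OE G) (x : Fin m) => x ≠ c q.1.2 - c q.1.1)
        rw [Fintype.card_congr e, Fintype.card_pi]
        have hfac : ∀ p : OE G, Fintype.card {x : Fin m // x ≠ c p.1.2 - c p.1.1} = m - 1 := by
          intro p
          rw [Fintype.card_subtype_compl, Fintype.card_subtype_eq, Fintype.card_fin]
        rw [Finset.prod_congr rfl fun p _ => hfac p, Finset.prod_const, Finset.card_univ]
    _ = m ^ Fintype.card V * (m - 1) ^ Fintype.card (OE G) := by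
        rw [Finset.sum_const, Finset.card_univ, smul_eq_mul, Fintype.card_fun,
          Fintype.card_fin]

lemma exists_good_cover (G : SimpleGraph V) [Fintype V] (m : ℕ) [NeZero m] :
    ∃ C : DPCover G m,
      C.count * m ^ Nat.card G.edgeSet ≤
        m ^ Fintype.card V * (m - 1) ^ Nat.card G.edgeSet := by
  classical
  haveI : Fintype (OE G) := Fintype.ofFinite _
  haveI : Nonempty (Fin m) := ⟨⟨0, Nat.pos_of_ne_zero (NeZero.ne m)⟩⟩
  have hE : Fintype.card (OE G) = Nat.card G.edgeSet := by
    rw [← Nat.card_eq_fintype_card, card_orientedEdges]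
  by_contra h
  push_neg at h
  have h' : ∀ τ : OE G → Fin m,
      m ^ Fintype.card V * (m - 1) ^ Nat.card G.edgeSet <
        (shiftCover G m τ).count * m ^ Nat.card G.edgeSet :=
    fun τ => h (shiftCover G m τ)
  have hlt := Finset.sum_lt_sum_of_nonempty
    (Finset.univ_nonempty (α := OE G → Fin m)) (fun τ _ => h' τ)
  rw [Finset.sum_const, Finset.card_univ, ← Finset.sum_mul, sum_shiftCover_count,
    Fintype.card_fun, Fintype.card_fin, hE, smul_eq_mul] at hlt
  rw [mul_comm] at hlt
  exact lt_irrefl _ hlt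

end Aux

/-- A trivial `0`-fold cover. -/
noncomputable def trivialCover0 {W : Type} (G : SimpleGraph W) : DPCover G 0 where
  X := Empty
  H := ⊥
  L := fun _ => ∅
  partition := fun x => x.elim
  fold := fun _ => by simp
  cliques := fun _ x hx => absurd hx (Set.notMem_empty x)
  cross := fun _ _ x hx => absurd hx (Set.notMem_empty x)
  matching := fun _ _ _ x hx => absurd hx (Set.notMem_empty x)
  matching' := fun _ _ _ y hy => absurd hy (Set.notMem_empty y)

theorem stmt_7 {V : Type} [Fintype V] (G : SimpleGraph V)
    (v e : ℕ) (hv : Fintype.card V = v) (he : Nat.card G.edgeSet = e) (m : ℕ) :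
    (PDP G m : ℚ) ≤ (m : ℚ) ^ v * ((m : ℚ) - 1) ^ e / (m : ℚ) ^ e := by
  classical
  subst hv; subst he
  rcases Nat.eq_zero_or_pos m with rfl | hm
  · rcases isEmpty_or_nonempty V with hV | hV
    · have hv0 : Fintype.card V = 0 := Fintype.card_eq_zero
      haveI : IsEmpty ↥G.edgeSet := ⟨fun x => by
        rcases x with ⟨s, hs⟩
        induction s using Sym2.ind with
        | _ a b => exact hV.elim a⟩
      have he0 : Nat.card G.edgeSet = 0 := Nat.card_of_isEmpty
      rw [hv0, he0]
      have hcount : (trivialCover0 G).count = 1 := by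
        rw [DPCover.count]
        haveI : Unique {f : V → (trivialCover0 G).X // (trivialCover0 G).IsColoring f} :=
          { default := ⟨fun w => hV.elim w, fun w => hV.elim w, fun u => hV.elim u⟩,
            uniq := fun f => Subtype.ext (funext fun w => hV.elim w) }
        exact Nat.card_unique
      have hle : PDP G 0 ≤ 1 := Nat.sInf_le ⟨trivialCover0 G, hcount⟩
      simp only [pow_zero, Nat.cast_zero]
      rw [one_mul, div_one]
      exact_mod_cast hle
    · have hcount : (trivialCover0 G).count = 0 := by
        rw [DPCover.count]
        haveI : IsEmpty {f : V → (trivialCover0 G).X // (trivialCover0 G).IsColoring f} :=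
          ⟨fun f => Empty.elim (f.1 (Classical.arbitrary V))⟩
        exact Nat.card_of_isEmpty
      have hPDP : PDP G 0 = 0 :=
        Nat.le_zero.mp (Nat.sInf_le ⟨trivialCover0 G, hcount⟩)
      rw [hPDP]
      have hne : Fintype.card V ≠ 0 := Fintype.card_ne_zero
      simp [zero_pow hne]
  · haveI : NeZero m := ⟨hm.ne'⟩
    letI : LinearOrder V := LinearOrder.lift' (Fintype.equivFin V) (Fintype.equivFin V).injective
    obtain ⟨C, hC⟩ := exists_good_cover G m
    have h1 : PDP G m ≤ C.count := Nat.sInf_le ⟨C, rfl⟩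
    have hmpos : (0 : ℚ) < (m : ℚ) ^ Nat.card G.edgeSet := by positivity
    rw [le_div_iff₀ hmpos]
    have hcast : ((C.count : ℚ)) * (m : ℚ) ^ Nat.card G.edgeSet ≤
        (m : ℚ) ^ Fintype.card V * ((m - 1 : ℕ) : ℚ) ^ Nat.card G.edgeSet := by
      exact_mod_cast hC
    rw [Nat.cast_pred hm] at hcast
    calc (PDP G m : ℚ) * (m : ℚ) ^ Nat.card G.edgeSet
        ≤ (C.count : ℚ) * (m : ℚ) ^ Nat.card G.edgeSet := by
          apply mul_le_mul_of_nonneg_right _ hmpos.le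
          exact_mod_cast h1
      _ ≤ _ := hcast
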